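/- Let q > 1, let n ∈ ℕ, and let φ₀ ∈ L¹(ℝ). Define φ_{m+1}(x) = φ_m(x) − q^{−(m+1)} · φ_m(x/q) for m ∈ ℕ. Then each φ_m ∈ L¹(ℝ), and for every ω ≠ 0 the Fourier transform satisfies 𝓕φ_n(ω) = (1−q)^n · ω^n · (d_q^n 𝓕φ₀)(ω), where d_q is the q-derivative and d_q^n its n-fold iterate. -/

import Mathlib

open MeasureTheory

/-- The q-derivative of a function `F : ℝ → ℂ`. -/
noncomputable def qDeriv (q : ℝ) (F : ℝ → ℂ) : ℝ → ℂ :=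
  fun ω => (F (q * ω) - F ω) / ((q * ω - ω : ℝ) : ℂ)

open Real in
lemma aux_exp_integrable (f : ℝ → ℂ) (hf : Integrable f) (ω : ℝ) :
    Integrable (fun x : ℝ => Complex.exp ((-2 * π * x * ω : ℝ) * Complex.I) • f x) := by
  simp_rw [smul_eq_mul]
  apply hf.bdd_mul (c := 1)
  · exact (Complex.continuous_exp.comp (by continuity)).aestronglyMeasurable
  · exact Filter.Eventually.of_forall (fun x => le_of_eq (Complex.norm_exp_ofReal_mul_I _))

open Real in
lemma aux_fourier_sub (f g : ℝ → ℂ) (hf : Integrable f) (hg : Integrable g) (ω : ℝ) :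
    FourierTransform.fourier (fun x => f x - g x) ω =
      FourierTransform.fourier f ω - FourierTransform.fourier g ω := by
  simp_rw [Real.fourier_real_eq_integral_exp_smul, smul_sub]
  exact integral_sub (aux_exp_integrable f hf ω) (aux_exp_integrable g hg ω)

open Real in
lemma aux_fourier_smul (f : ℝ → ℂ) (c : ℂ) (ω : ℝ) :
    FourierTransform.fourier (fun x => c * f x) ω = c * FourierTransform.fourier f ω := by
  simp_rw [Real.fourier_real_eq_integral_exp_smul, smul_eq_mul]
  rw [← integral_const_mul]
  congr 1; ext x; ring

open Real in
lemma aux_fourier_comp_div (f : ℝ → ℂ) (q : ℝ) (hq : 0 < q) (ω : ℝ) :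
    FourierTransform.fourier (fun x => f (x / q)) ω = (q : ℂ) * FourierTransform.fourier f (q * ω) := by
  simp_rw [Real.fourier_real_eq_integral_exp_smul]
  have h := MeasureTheory.Measure.integral_comp_div
    (fun y : ℝ => Complex.exp ((-2 * π * y * (q * ω) : ℝ) * Complex.I) • f y) q
  have h2 : (∫ x : ℝ, Complex.exp ((-2 * π * x * ω : ℝ) * Complex.I) • f (x / q))
      = ∫ x : ℝ, Complex.exp ((-2 * π * (x / q) * (q * ω) : ℝ) * Complex.I) • f (x / q) := by
    congr 1; ext x
    have hx : -2 * π * (x / q) * (q * ω) = -2 * π * x * ω := by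
      field_simp
    rw [hx]
  rw [h2, h, abs_of_pos hq, Complex.real_smul]

/-- the Fourier transform of the recursively defined sequence is given by
iterated q-derivatives (Proposition `Fourier`). -/
theorem stmt_2 (q : ℝ) (hq : 1 < q) (n : ℕ) (φ₀ : ℝ → ℂ)
    (hint : Integrable φ₀)
    (φ : ℕ → ℝ → ℂ) (hφ0 : φ 0 = φ₀)
    (hrec : ∀ m : ℕ, ∀ x : ℝ, φ (m + 1) x = φ m x - (q : ℂ) ^ (-(m + 1 : ℤ)) * φ m (x / q)) :
    (∀ m : ℕ, Integrable (φ m)) ∧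
    (∀ ω : ℝ, ω ≠ 0 →
      FourierTransform.fourier (φ n) ω =
        ((1 - q : ℝ) : ℂ) ^ n * (ω : ℂ) ^ n * ((qDeriv q)^[n] (FourierTransform.fourier φ₀)) ω) := by
  have hq0 : (0 : ℝ) < q := by linarith
  have hqne : q ≠ 0 := ne_of_gt hq0
  have hI : ∀ m : ℕ, Integrable (φ m) := by
    intro m
    induction m with
    | zero => rwa [hφ0]
    | succ m ih =>
      have heq : φ (m + 1) = fun x => φ m x - (q : ℂ) ^ (-(m + 1 : ℤ)) * φ m (x / q) :=
        funext (hrec m)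
      rw [heq]
      exact ih.sub ((ih.comp_div hqne).const_mul _)
  refine ⟨hI, ?_⟩
  induction n with
  | zero => simp [hφ0]
  | succ n ih =>
    intro ω hω
    have hqω : q * ω ≠ 0 := mul_ne_zero hqne hω
    set F := FourierTransform.fourier φ₀ with hF
    set G := (qDeriv q)^[n] F with hG
    -- Fourier transform of φ (n+1)
    have heq : φ (n + 1) = fun x => φ n x - ((q : ℂ) ^ (-(n + 1 : ℤ))) * φ n (x / q) :=
      funext (hrec n)
    have step : FourierTransform.fourier (φ (n + 1)) ω
        = FourierTransform.fourier (φ n) ω - (q : ℂ) ^ (-(n : ℤ)) * FourierTransform.fourier (φ n) (q * ω) := by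
      rw [heq, aux_fourier_sub _ _ (hI n) (((hI n).comp_div hqne).const_mul _),
        aux_fourier_smul, aux_fourier_comp_div _ _ hq0]
      have : (q : ℂ) ^ (-(n + 1 : ℤ)) * ((q : ℂ) * FourierTransform.fourier (φ n) (q * ω))
          = (q : ℂ) ^ (-(n : ℤ)) * FourierTransform.fourier (φ n) (q * ω) := by
        have hqc : (q : ℂ) ≠ 0 := by exact_mod_cast hqne
        rw [← mul_assoc]
        congr 1
        rw [show (-(n + 1 : ℤ)) = (-(n : ℤ)) - 1 by ring, zpow_sub₀ hqc, zpow_one,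
          div_mul_cancel₀ _ hqc]
      rw [this]
    rw [step, ih ω hω, ih (q * ω) hqω]
    have hGqd : (qDeriv q)^[n + 1] F = qDeriv q G := by
      rw [Function.iterate_succ']; rfl
    rw [hGqd]
    have hkey : G ω - G (q * ω) = ((1 - q : ℝ) : ℂ) * (ω : ℂ) * qDeriv q G ω := by
      unfold qDeriv
      have hden : ((q : ℂ) * ω - ω) ≠ 0 := by
        have : ((q : ℂ) * ω - ω) = ((q - 1 : ℝ) : ℂ) * (ω : ℂ) := by push_cast; ring
        rw [this]
        exact mul_ne_zero (by exact_mod_cast sub_ne_zero.2 (ne_of_gt hq))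
          (by exact_mod_cast hω)
      push_cast
      rw [mul_div_assoc', eq_div_iff hden]
      ring
    have hqpow : ((q : ℂ) ^ (-(n : ℤ))) * (((1 - q : ℝ) : ℂ) ^ n * ((q * ω : ℝ) : ℂ) ^ n * G (q * ω))
        = ((1 - q : ℝ) : ℂ) ^ n * (ω : ℂ) ^ n * G (q * ω) := by
      have hqc : (q : ℂ) ≠ 0 := by exact_mod_cast hqne
      rw [zpow_neg, zpow_natCast]
      push_cast
      rw [mul_pow]
      field_simp
    rw [hqpow]
    calc ((1 - q : ℝ) : ℂ) ^ n * (ω : ℂ) ^ n * G ω - ((1 - q : ℝ) : ℂ) ^ n * (ω : ℂ) ^ n * G (q * ω)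
        = ((1 - q : ℝ) : ℂ) ^ n * (ω : ℂ) ^ n * (G ω - G (q * ω)) := by ring
      _ = ((1 - q : ℝ) : ℂ) ^ (n + 1) * (ω : ℂ) ^ (n + 1) * qDeriv q G ω := by
          rw [hkey]; ring
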